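/- Let M₁, c₀, c₁, α̃ be positive constants, let y ≠ 0 be an element of a real Hilbert space H, and let β ≥ 0 be a given number (playing the role of ‖f_δ − F(0)‖). Then there exist λ > 0 and a strictly decreasing sequence of positive numbers (a_n)_{n≥0} with a_n → 0 such that: (i) a_n/a_{n+1} ≤ 2 for all n ≥ 0; (ii) β ≤ a₀³/λ; (iii) M₁/λ ≤ ‖y‖; (iv) c₀(M₁ + a₀)/λ ≤ 1/2; (v) a_n²/λ − α̃ a_n⁴/(2λ) + c₁(a_n − a_{n+1})/a_{n+1} ≤ a_{n+1}²/λ for all n ≥ 0. In particular, a sequence of the form a_n = a₀/(1+n)^{1/4} with a₀ sufficiently large can be chosen. -/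

import Mathlib

open Filter Topology Set

set_option maxHeartbeats 1000000 in
/-- Let `M₁, c₀, c₁, α̃` be positive constants, `y ≠ 0` an element of a
real Hilbert space `H`, and `β ≥ 0` (playing the role of `‖f_δ - F(0)‖`).  Then there
exist `λ > 0` and a strictly decreasing sequence of positive numbers `(a_n)` with
`a_n → 0` such that: (i) `a_n/a_{n+1} ≤ 2`; (ii) `β ≤ a₀³/λ`; (iii) `M₁/λ ≤ ‖y‖`;
(iv) `c₀(M₁ + a₀)/λ ≤ 1/2`; and
(v) `a_n²/λ - α̃a_n⁴/(2λ) + c₁(a_n - a_{n+1})/a_{n+1} ≤ a_{n+1}²/λ` for all `n`.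
In particular, a sequence of the form `a_n = a₀/(1+n)^{1/4}` with `a₀` sufficiently large
can be chosen. -/
theorem dsm_parameter_choice_discrete
    {H : Type*} [NormedAddCommGroup H] [InnerProductSpace ℝ H]
    (M₁ c₀ c₁ αtil β : ℝ) (hM₁ : 0 < M₁) (hc₀ : 0 < c₀) (hc₁ : 0 < c₁)
    (hαtil : 0 < αtil) (hβ : 0 ≤ β) (y : H) (hy : y ≠ 0) :
    ∃ lam : ℝ, 0 < lam ∧ ∃ a : ℕ → ℝ,
      (∃ a₀ : ℝ, 0 < a₀ ∧ ∀ n : ℕ, a n = a₀ / (1 + (n : ℝ)) ^ ((1 : ℝ) / 4)) ∧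
      (∀ n : ℕ, 0 < a n) ∧
      StrictAnti a ∧
      Tendsto a atTop (𝓝 0) ∧
      (∀ n : ℕ, a n / a (n + 1) ≤ 2) ∧
      β ≤ a 0 ^ 3 / lam ∧
      M₁ / lam ≤ ‖y‖ ∧
      c₀ * (M₁ + a 0) / lam ≤ 1 / 2 ∧
      (∀ n : ℕ,
        a n ^ 2 / lam - αtil * a n ^ 4 / (2 * lam) + c₁ * (a n - a (n + 1)) / a (n + 1)
          ≤ a (n + 1) ^ 2 / lam) := by
  have hny : 0 < ‖y‖ := norm_pos_iff.mpr hy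
  -- choose the constants abstractly
  obtain ⟨a₀, lam, ha₀1, hlam, hβlam, hMy, hc₀lam, hkey⟩ :
      ∃ a₀ lam : ℝ, 1 ≤ a₀ ∧ 0 < lam ∧ β * lam ≤ a₀ ^ 3 ∧ M₁ ≤ ‖y‖ * lam ∧
        2 * c₀ * (M₁ + a₀) ≤ lam ∧ a₀ ^ 2 + c₁ * lam / 2 ≤ αtil * a₀ ^ 4 := by
    set C : ℝ := M₁ / ‖y‖ + 2 * c₀ * M₁ with hCdef
    set D : ℝ := 2 * c₀ with hDdef
    have hC : 0 < C := by positivity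
    have hD : 0 < D := by positivity
    set K : ℝ := 1 + c₁ * (C + D) / 2 with hKdef
    have hK : 0 < K := by positivity
    set a₀ : ℝ := 1 + Real.sqrt (β * (C + D)) + Real.sqrt (K / αtil) with ha₀def
    have h1 := Real.sqrt_nonneg (β * (C + D))
    have h2 := Real.sqrt_nonneg (K / αtil)
    have ha₀1 : 1 ≤ a₀ := by simp only [ha₀def]; linarith
    have ha₀ : 0 < a₀ := by linarith
    have hsq1 : β * (C + D) ≤ a₀ ^ 2 := by
      have h3 : Real.sqrt (β * (C + D)) ^ 2 = β * (C + D) :=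
        Real.sq_sqrt (by positivity)
      have h4 : Real.sqrt (β * (C + D)) ≤ a₀ := by simp only [ha₀def]; linarith
      nlinarith [pow_le_pow_left₀ h1 h4 2]
    have hsq2 : K / αtil ≤ a₀ ^ 2 := by
      have h3 : Real.sqrt (K / αtil) ^ 2 = K / αtil := Real.sq_sqrt (by positivity)
      have h4 : Real.sqrt (K / αtil) ≤ a₀ := by simp only [ha₀def]; linarith
      nlinarith [pow_le_pow_left₀ h2 h4 2]
    clear_value a₀ K C D
    refine ⟨a₀, C + D * a₀, ha₀1, by positivity, ?_, ?_, ?_, ?_⟩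
    · have hlamle : C + D * a₀ ≤ (C + D) * a₀ := by nlinarith
      calc β * (C + D * a₀) ≤ β * ((C + D) * a₀) := by
            apply mul_le_mul_of_nonneg_left hlamle hβ
        _ ≤ a₀ ^ 2 * a₀ := by nlinarith
        _ = a₀ ^ 3 := by ring
    · have h0 : M₁ / ‖y‖ ≤ C + D * a₀ := by nlinarith [hCdef.ge, hCdef.le]
      rw [div_le_iff₀ hny] at h0
      nlinarith
    · have hDa : D * a₀ = 2 * c₀ * a₀ := by rw [hDdef]
      have h0 : 0 < M₁ / ‖y‖ := by positivity
      linarith [hCdef.le, hCdef.ge, hDdef.le]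
    · have h5 : K ≤ αtil * a₀ ^ 2 := by
        rw [div_le_iff₀ hαtil] at hsq2; linarith
      have ha2 : 1 ≤ a₀ ^ 2 := by nlinarith
      have haa : a₀ ≤ a₀ ^ 2 := by nlinarith
      have h6 : C + D * a₀ ≤ (C + D) * a₀ ^ 2 := by
        linarith [mul_le_mul_of_nonneg_left ha2 hC.le,
          mul_le_mul_of_nonneg_left haa hD.le]
      rw [hKdef] at h5
      have H1 := mul_le_mul_of_nonneg_right h5 (sq_nonneg a₀)
      have H2 := mul_le_mul_of_nonneg_left h6 (by positivity : (0:ℝ) ≤ c₁ / 2)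
      linarith [H1, H2]
  have ha₀ : 0 < a₀ := by linarith
  -- the sequence
  set g : ℕ → ℝ := fun n => (1 + (n : ℝ)) ^ ((1 : ℝ) / 4) with hgdef
  have hbase : ∀ n : ℕ, (1 : ℝ) ≤ 1 + (n : ℝ) := by
    intro n; have := Nat.cast_nonneg (α := ℝ) n; linarith
  have hg1 : ∀ n : ℕ, 1 ≤ g n := fun n => Real.one_le_rpow (hbase n) (by norm_num)
  have hgpos : ∀ n : ℕ, 0 < g n := fun n => lt_of_lt_of_le one_pos (hg1 n)
  have hg4 : ∀ n : ℕ, g n ^ (4 : ℕ) = 1 + (n : ℝ) := by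
    intro n
    rw [hgdef, ← Real.rpow_natCast _ 4, ← Real.rpow_mul (by linarith [hbase n])]
    norm_num
  have hgmono : ∀ n : ℕ, g n < g (n + 1) := by
    intro n
    apply Real.rpow_lt_rpow (by linarith [hbase n]) (by push_cast; linarith) (by norm_num)
  have hg0 : g 0 = 1 := by
    have h4 : g 0 ^ (4 : ℕ) = 1 := by rw [hg4 0]; norm_num
    have hle : g 0 ≤ 1 := by
      by_contra hgt
      push_neg at hgt
      have h5 := one_lt_pow₀ hgt (by norm_num : (4 : ℕ) ≠ 0)
      rw [h4] at h5; exact lt_irrefl _ h5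
    linarith [hg1 0]
  clear_value g
  refine ⟨lam, hlam, fun n => a₀ / g n, ⟨a₀, ha₀, fun n => by rw [hgdef]⟩,
    ?_, ?_, ?_, ?_, ?_, ?_, ?_, ?_⟩
  · intro n; exact div_pos ha₀ (hgpos n)
  · exact strictAnti_nat_of_succ_lt fun n =>
      div_lt_div_of_pos_left ha₀ (hgpos n) (hgmono n)
  · apply Tendsto.div_atTop (tendsto_const_nhds)
    rw [hgdef]
    exact (tendsto_rpow_atTop (by norm_num)).comp
      (tendsto_atTop_add_const_left _ 1 tendsto_natCast_atTop_atTop)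
  · -- ratio ≤ 2
    intro n
    have hgn := hgpos n
    have hgn1 := hgpos (n + 1)
    have h : a₀ / g n / (a₀ / g (n + 1)) = g (n + 1) / g n := by
      field_simp
    rw [h]
    apply le_of_pow_le_pow_left₀ (n := 4) (by norm_num) (by norm_num)
    rw [div_pow, hg4, hg4]
    rw [div_le_iff₀ (by linarith [hbase n])]
    push_cast
    nlinarith [hbase n]
  · -- β ≤ a 0 ^ 3 / lam
    show β ≤ (a₀ / g 0) ^ 3 / lam
    rw [hg0, div_one, le_div_iff₀ hlam]
    exact hβlam
  · rw [div_le_iff₀ hlam]; exact hMy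
  · show c₀ * (M₁ + a₀ / g 0) / lam ≤ 1 / 2
    rw [hg0, div_one, div_le_iff₀ hlam]; linarith
  · -- the main recursive inequality
    intro n
    set x : ℝ := 1 / (1 + (n : ℝ)) with hxdef
    have hx : 0 < x := by rw [hxdef]; positivity
    clear_value x
    have hgn := hgpos n
    have hgn1 := hgpos (n + 1)
    have hE : (1 : ℝ) + ((n : ℝ) + 1) = (1 + (n : ℝ)) * (1 + x) := by
      rw [hxdef]; field_simp; ring
    have hcast : ((n + 1 : ℕ) : ℝ) = (n : ℝ) + 1 := by push_cast; ring
    -- ratio bound: g (n+1) ≤ g n * (1 + x/4)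
    have hrat : g (n + 1) ≤ g n * (1 + x / 4) := by
      apply le_of_pow_le_pow_left₀ (n := 4) (by norm_num) (by nlinarith)
      rw [mul_pow, hg4, hg4, hcast, hE]
      have hb : (1 : ℝ) + x ≤ (1 + x / 4) ^ (4 : ℕ) := by
        nlinarith [sq_nonneg x, sq_nonneg (x * x), hx.le]
      nlinarith [hbase n]
    -- a n - a (n+1) ≤ a (n+1) * (x/4)
    have hdiff : a₀ / g n - a₀ / g (n + 1) ≤ (a₀ / g (n + 1)) * (x / 4) := by
      rw [div_sub_div _ _ (ne_of_gt hgn) (ne_of_gt hgn1), div_mul_eq_mul_div,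
        div_le_div_iff₀ (by positivity) hgn1]
      nlinarith [mul_le_mul_of_nonneg_left
        (by linarith : g (n + 1) - g n ≤ g n * (x / 4))
        (by positivity : (0:ℝ) ≤ a₀ * g (n + 1))]
    have h1 : c₁ * (a₀ / g n - a₀ / g (n + 1)) / (a₀ / g (n + 1)) ≤ c₁ * (x / 4) := by
      rw [div_le_iff₀ (by positivity)]
      nlinarith [div_pos ha₀ hgn1, mul_le_mul_of_nonneg_left hdiff hc₁.le]
    -- squares
    have hs2 : ∀ m : ℕ, (g m ^ 2) ^ 2 = 1 + (m : ℝ) := by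
      intro m; have := hg4 m; nlinarith
    have hsq : (a₀ / g n) ^ 2 - (a₀ / g (n + 1)) ^ 2 ≤ a₀ ^ 2 * x / 2 := by
      set s : ℝ := g n ^ 2 with hsdef
      set t : ℝ := g (n + 1) ^ 2 with htdef
      have hs : 0 < s := by rw [hsdef]; positivity
      have ht : 0 < t := by rw [htdef]; positivity
      clear_value s t
      have hs1 : 1 ≤ s := by rw [hsdef]; nlinarith [hg1 n]
      have hseq : s ^ 2 = 1 + (n : ℝ) := by rw [hsdef]; exact hs2 n
      have hteq : t ^ 2 = 1 + (n : ℝ) + 1 := by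
        have h := hs2 (n + 1); rw [← htdef] at h; push_cast at h ⊢; linarith
      have hst : s ≤ t := by nlinarith
      have hx2 : x * s ^ 2 = 1 := by
        rw [hseq, hxdef]; field_simp
      have hx3 : x * s ^ 3 = s := by
        rw [show s ^ 3 = s ^ 2 * s from by ring, ← mul_assoc, hx2, one_mul]
      have key : (t - s) * (t + s) = 1 := by nlinarith
      have htsp : (0:ℝ) < t + s := by linarith
      have hintnn : 0 ≤ x * s * (t - s) * (t + 2 * s) := by
        have := sub_nonneg.mpr hst
        positivity
      have hts : t - s = 1 / (t + s) := by
        rw [eq_div_iff (ne_of_gt htsp)]; exact key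
      have hgoal : (t - s) * 2 * (t + s) ≤ x * (s * t) * (t + s) := by
        have expand : x * (s * t) * (t + s)
            = x * s * (t - s) * (t + 2 * s) + 2 * (x * s ^ 3) := by ring
        have lhs_eq : (t - s) * 2 * (t + s) = 2 := by linear_combination 2 * key
        rw [lhs_eq, expand, hx3]
        linarith [hintnn, hs1]
      have hd : 1 / s - 1 / t ≤ x / 2 := by
        rw [div_sub_div _ _ (ne_of_gt hs) (ne_of_gt ht),
          div_le_div_iff₀ (by positivity) (by norm_num)]
        have h9 := le_of_mul_le_mul_right hgoal htsp
        linarith [h9]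
      have e1 : (a₀ / g n) ^ 2 = a₀ ^ 2 * (1 / s) := by
        rw [hsdef]; field_simp
      have e2 : (a₀ / g (n + 1)) ^ 2 = a₀ ^ 2 * (1 / t) := by
        rw [htdef]; field_simp
      rw [e1, e2]
      nlinarith [sq_nonneg a₀]
    -- fourth power identity
    have hq : (a₀ / g n) ^ 4 = a₀ ^ 4 * x := by
      rw [div_pow, hg4 n, hxdef]; ring
    -- combine
    have hmain : a₀ ^ 2 * x / 2 / lam + c₁ * (x / 4) ≤ αtil * (a₀ ^ 4 * x) / (2 * lam) := by
      have hmul := mul_le_mul_of_nonneg_right hkey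
        (by positivity : (0:ℝ) ≤ x / (2 * lam))
      have hfe : (a₀ ^ 2 + c₁ * lam / 2) * (x / (2 * lam))
          = a₀ ^ 2 * x / 2 / lam + c₁ * (x / 4) := by
        field_simp; ring
      have hfe2 : αtil * a₀ ^ 4 * (x / (2 * lam)) = αtil * (a₀ ^ 4 * x) / (2 * lam) := by
        ring
      linarith
    have e3 : (a₀ / g n) ^ 2 / lam - (a₀ / g (n + 1)) ^ 2 / lam
        = ((a₀ / g n) ^ 2 - (a₀ / g (n + 1)) ^ 2) / lam := (sub_div _ _ _).symm
    have h2 : ((a₀ / g n) ^ 2 - (a₀ / g (n + 1)) ^ 2) / lam ≤ a₀ ^ 2 * x / 2 / lam := by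
      gcongr
    show (a₀ / g n) ^ 2 / lam - αtil * (a₀ / g n) ^ 4 / (2 * lam)
        + c₁ * (a₀ / g n - a₀ / g (n + 1)) / (a₀ / g (n + 1))
        ≤ (a₀ / g (n + 1)) ^ 2 / lam
    rw [hq]
    linarith [h1, h2, hmain, e3]
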